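/- Let K be a simplicial complex on vertex set V, v a vertex of K, I a 1-simplex with vertex set {v₁, v₂} disjoint from V. Define wed_v(K) = (I ⋆ link_K{v}) ∪ (∂I ⋆ (K \ {v})), where K \ {v} is the induced subcomplex on V \ {v}, link_K{v} is the link of v, and ⋆ denotes simplicial join. Then the geometric realization of wed_v(K) is homeomorphic to the geometric realization of the join ∂I ⋆ K (the suspension of K). In particular, if K is a simplicial sphere then so is wed_v(K). -/

import Mathlib

variable {V : Type*}

/-- An (abstract) simplicial complex on the vertex set `V`: a collection of finite
subsets of `V` closed under taking subsets. -/
def IsComplex (K : Set (Finset V)) : Prop :=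
  ∀ σ ∈ K, ∀ τ ⊆ σ, τ ∈ K

/-- The link of a vertex `v` in `K`. -/
def linkOf [DecidableEq V] (K : Set (Finset V)) (v : V) : Set (Finset V) :=
  {σ | v ∉ σ ∧ insert v σ ∈ K}

/-- The deletion `K \ {v}`: the induced subcomplex on the vertices other than `v`. -/
def delOf (K : Set (Finset V)) (v : V) : Set (Finset V) :=
  {σ | σ ∈ K ∧ v ∉ σ}

/-- The simplicial wedge `wed_v(K) = (I ⋆ link_K{v}) ∪ (∂I ⋆ (K \ {v}))` of `K` at the
vertex `v`.  Its vertex set is `V ⊕ Unit`, where `v₁ = Sum.inl v` and `v₂ = Sum.inr ()`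
are the two vertices of the edge `I`. -/
def wedgeAt [DecidableEq V] (K : Set (Finset V)) (v : V) : Set (Finset (V ⊕ Unit)) :=
  {τ | ∃ (s : Finset (V ⊕ Unit)) (σ : Finset V),
    s ⊆ {Sum.inl v, Sum.inr ()} ∧ τ = s ∪ σ.image Sum.inl ∧
    (σ ∈ linkOf K v ∨ (s ≠ {Sum.inl v, Sum.inr ()} ∧ σ ∈ delOf K v))}

/-- The join `∂I ⋆ K` (the suspension of `K`), on the vertex set `V ⊕ Bool`, where the
two new suspension vertices are `Sum.inr true` and `Sum.inr false`. -/
def suspOf [DecidableEq V] (K : Set (Finset V)) : Set (Finset (V ⊕ Bool)) :=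
  {τ | ∃ (s : Finset Bool) (σ : Finset V),
    s ≠ Finset.univ ∧ σ ∈ K ∧ τ = s.image Sum.inr ∪ σ.image Sum.inl}

/-- The geometric realization of a simplicial complex on a finite vertex set `V`,
realized inside `V → ℝ` as convex combinations supported on faces. -/
def realization [Fintype V] (K : Set (Finset V)) : Set (V → ℝ) :=
  {f | (∀ w, 0 ≤ f w) ∧ (∑ w, f w) = 1 ∧ ∃ σ ∈ K, ∀ w, w ∉ σ → f w = 0}

set_option linter.unusedSectionVars false

section Compact
variable {W : Type*} [Fintype W]

lemma isCompact_realization (K' : Set (Finset W)) : IsCompact (realization K') := by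
  have heq : realization K' = ⋃ σ ∈ K', (stdSimplex ℝ W ∩ {f | ∀ w ∉ σ, f w = 0}) := by
    ext f
    simp only [realization, Set.mem_setOf_eq, Set.mem_iUnion, Set.mem_inter_iff,
      stdSimplex, Set.mem_setOf_eq]
    tauto
  rw [heq]
  refine Set.Finite.isCompact_biUnion (Set.toFinite _) (fun σ _ => ?_)
  refine (isCompact_stdSimplex ℝ W).inter_right ?_
  have : {f : W → ℝ | ∀ w ∉ σ, f w = 0} = ⋂ w, ⋂ (_ : w ∉ σ), {f | f w = 0} := by
    ext f; simp
  rw [this]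
  exact isClosed_iInter fun w => isClosed_iInter fun _ =>
    isClosed_eq (continuous_apply w) continuous_const

end Compact

section Wedge
variable [Fintype V] [DecidableEq V] (K : Set (Finset V)) (v : V)

/-- The affine-on-pieces map from the wedge realization to the suspension realization. -/
noncomputable def Lmap (f : V ⊕ Unit → ℝ) : V ⊕ Bool → ℝ :=
  Sum.elim
    (Function.update (fun w => f (Sum.inl w)) v
      (2 * min (f (Sum.inl v)) (f (Sum.inr ()))))
    (fun t => if t then max (f (Sum.inl v) - f (Sum.inr ())) 0
      else max (f (Sum.inr ()) - f (Sum.inl v)) 0)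

lemma Lmap_continuous : Continuous (Lmap (V := V) v) := by
  apply continuous_pi
  rintro (w | t)
  · by_cases hw : w = v
    · rw [hw]
      simpa [Lmap] using
        (((continuous_apply (Sum.inl v)).min (continuous_apply (Sum.inr ()))).const_smul
          (2 : ℝ)).congr (fun f => by simp [smul_eq_mul])
    · simpa [Lmap, Function.update_of_ne hw] using continuous_apply (Sum.inl w)
  · cases t
    · simpa [Lmap] using ((continuous_apply (Sum.inr ())).sub
        (continuous_apply (Sum.inl v))).max continuous_const
    · simpa [Lmap] using ((continuous_apply (Sum.inl v)).sub
        (continuous_apply (Sum.inr ()))).max continuous_const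

lemma Lmap_inl_v (f : V ⊕ Unit → ℝ) :
    Lmap v f (Sum.inl v) = 2 * min (f (Sum.inl v)) (f (Sum.inr ())) := by
  simp [Lmap]

lemma Lmap_inl_ne (f : V ⊕ Unit → ℝ) {w : V} (hw : w ≠ v) :
    Lmap v f (Sum.inl w) = f (Sum.inl w) := by
  simp [Lmap, Function.update_of_ne hw]

lemma Lmap_tt (f : V ⊕ Unit → ℝ) :
    Lmap v f (Sum.inr true) = max (f (Sum.inl v) - f (Sum.inr ())) 0 := by simp [Lmap]

lemma Lmap_ff (f : V ⊕ Unit → ℝ) :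
    Lmap v f (Sum.inr false) = max (f (Sum.inr ()) - f (Sum.inl v)) 0 := by simp [Lmap]

lemma min_add_max_sub (p q : ℝ) : min p q + max (p - q) 0 = p := by
  rcases le_total p q with h | h
  · simp [min_eq_left h, max_eq_right (sub_nonpos.2 h)]
  · simp [min_eq_right h, max_eq_left (sub_nonneg.2 h)]

lemma Lmap_injective : Function.Injective (Lmap (V := V) v) := by
  intro f g hfg
  have h1 : ∀ w : V, w ≠ v → f (Sum.inl w) = g (Sum.inl w) := by
    intro w hw
    have := congrFun hfg (Sum.inl w)
    rwa [Lmap_inl_ne v f hw, Lmap_inl_ne v g hw] at this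
  have h2 : min (f (Sum.inl v)) (f (Sum.inr ())) = min (g (Sum.inl v)) (g (Sum.inr ())) := by
    have := congrFun hfg (Sum.inl v)
    rw [Lmap_inl_v, Lmap_inl_v] at this
    linarith
  have h3 : max (f (Sum.inl v) - f (Sum.inr ())) 0
      = max (g (Sum.inl v) - g (Sum.inr ())) 0 := by
    have := congrFun hfg (Sum.inr true); rwa [Lmap_tt, Lmap_tt] at this
  have h4 : max (f (Sum.inr ()) - f (Sum.inl v)) 0
      = max (g (Sum.inr ()) - g (Sum.inl v)) 0 := by
    have := congrFun hfg (Sum.inr false); rwa [Lmap_ff, Lmap_ff] at this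
  have hfv : f (Sum.inl v) = g (Sum.inl v) := by
    have e1 := min_add_max_sub (f (Sum.inl v)) (f (Sum.inr ()))
    have e2 := min_add_max_sub (g (Sum.inl v)) (g (Sum.inr ()))
    rw [← e1, ← e2, h2, h3]
  have hfu : f (Sum.inr ()) = g (Sum.inr ()) := by
    have e1 := min_add_max_sub (f (Sum.inr ())) (f (Sum.inl v))
    have e2 := min_add_max_sub (g (Sum.inr ())) (g (Sum.inl v))
    rw [min_comm] at e1 e2
    rw [← e1, ← e2, h2, h4]
  funext w
  rcases w with w | u
  · by_cases hw : w = v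
    · subst hw; exact hfv
    · exact h1 w hw
  · cases u; exact hfu


lemma susp_pole_zero {g : V ⊕ Bool → ℝ} (hg : g ∈ realization (suspOf K)) :
    g (Sum.inr true) = 0 ∨ g (Sum.inr false) = 0 := by
  obtain ⟨hpos, hsum, τ, hτ, hzero⟩ := hg
  obtain ⟨s, σ, hs, hσ, rfl⟩ := hτ
  by_contra hcon
  push_neg at hcon
  obtain ⟨h1, h2⟩ := hcon
  apply hs
  apply Finset.eq_univ_iff_forall.2
  intro t
  have ht : ∀ t' : Bool, g (Sum.inr t') ≠ 0 → t' ∈ s := by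
    intro t' h'
    by_contra hmem
    apply h'
    apply hzero
    simp only [Finset.mem_union, Finset.mem_image]
    rintro (⟨x, _, hx⟩ | ⟨x, _, hx⟩)
    · exact hmem (by cases Sum.inr_injective hx; assumption)
    · cases hx
  cases t
  · exact ht false h2
  · exact ht true h1

lemma pair_ne_singl : ({Sum.inl v} : Finset (V ⊕ Unit)) ≠ {Sum.inl v, Sum.inr ()} := by
  intro h
  have : (Sum.inr () : V ⊕ Unit) ∈ ({Sum.inl v} : Finset (V ⊕ Unit)) := by
    rw [h]; simp
  simp at this

lemma pair_ne_singr : ({Sum.inr ()} : Finset (V ⊕ Unit)) ≠ {Sum.inl v, Sum.inr ()} := by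
  intro h
  have : (Sum.inl v : V ⊕ Unit) ∈ ({Sum.inr ()} : Finset (V ⊕ Unit)) := by
    rw [h]; simp
  simp at this

lemma singl_bool_ne_univ (t : Bool) : ({t} : Finset Bool) ≠ Finset.univ := by
  cases t <;> decide

lemma Lmap_mem {f : V ⊕ Unit → ℝ} (hf : f ∈ realization (wedgeAt K v)) :
    Lmap v f ∈ realization (suspOf K) := by
  obtain ⟨hpos, hsum, τ, hτ, hzero⟩ := hf
  obtain ⟨s, σ, hs_sub, rfl, hcase⟩ := hτ
  set p := f (Sum.inl v) with hp
  set q := f (Sum.inr ()) with hq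
  -- the `Bool` face
  set sB : Finset Bool := if q ≤ p then {true} else {false} with hsB
  have hsBne : sB ≠ Finset.univ := by
    rw [hsB]; split <;> exact singl_bool_ne_univ _
  have hBzero : ∀ t : Bool, t ∉ sB → Lmap v f (Sum.inr t) = 0 := by
    intro t ht
    rw [hsB] at ht
    cases t
    · rw [Lmap_ff]
      have : q ≤ p := by
        by_contra hc
        rw [if_neg hc] at ht
        simp at ht
      simpa using sub_nonpos.2 this
    · rw [Lmap_tt]
      have : ¬ q ≤ p := by
        intro hc
        rw [if_pos hc] at ht
        simp at ht
      simpa using sub_nonpos.2 (le_of_lt (not_le.1 this))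
  have hVzero : ∀ w : V, w ≠ v → w ∉ σ → Lmap v f (Sum.inl w) = 0 := by
    intro w hwv hwσ
    rw [Lmap_inl_ne v f hwv]
    apply hzero
    simp only [Finset.mem_union, Finset.mem_image]
    rintro (hws | ⟨x, hx, hxe⟩)
    · have := hs_sub hws
      simp only [Finset.mem_insert, Finset.mem_singleton] at this
      rcases this with h | h
      · exact hwv (Sum.inl_injective h)
      · cases h
    · cases Sum.inl_injective hxe; exact hwσ hx
  constructor
  · rintro (w | t)
    · by_cases hw : w = v
      · rw [hw, Lmap_inl_v]
        have := hpos (Sum.inl v); have := hpos (Sum.inr ())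
        positivity
      · rw [Lmap_inl_ne v f hw]; exact hpos _
    · cases t
      · rw [Lmap_ff]; exact le_max_right _ _
      · rw [Lmap_tt]; exact le_max_right _ _
  refine ⟨?_, ?_⟩
  · -- sum = 1
    rw [Fintype.sum_sum_type]
    have hA : (∑ w : V, Lmap v f (Sum.inl w))
        = 2 * min p q + ((∑ w : V, f (Sum.inl w)) - p) := by
      have heq : (fun w => Lmap v f (Sum.inl w))
          = Function.update (fun w => f (Sum.inl w)) v (2 * min p q) := by
        funext w
        by_cases hw : w = v
        · rw [hw, Lmap_inl_v, Function.update_self]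
        · rw [Lmap_inl_ne v f hw, Function.update_of_ne hw]
      rw [heq, Finset.sum_update_of_mem (Finset.mem_univ v)]
      have hd := Finset.sum_eq_sum_sdiff_singleton_add (Finset.mem_univ v)
        (fun w => f (Sum.inl w))
      rw [← hp] at hd
      linarith
    have hB : (∑ t : Bool, Lmap v f (Sum.inr t)) = p + q - 2 * min p q := by
      rw [Fintype.sum_bool, Lmap_tt, Lmap_ff]
      have e1 := min_add_max_sub p q
      have e2 := min_add_max_sub q p
      rw [min_comm q p] at e2
      linarith
    have hC : (∑ w : V, f (Sum.inl w)) + q = 1 := by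
      rw [← hsum, Fintype.sum_sum_type]
      simp [hq]
    rw [hA, hB]
    linarith
  · -- support
    rcases hcase with ⟨hvσ, hins⟩ | ⟨hsne, hσK, hvσ⟩
    · refine ⟨sB.image Sum.inr ∪ (insert v σ).image Sum.inl,
        ⟨sB, insert v σ, hsBne, hins, rfl⟩, ?_⟩
      rintro (w | t) hw
      · have hwmem : w ∉ insert v σ := by
          intro hc
          exact hw (by simp only [Finset.mem_union, Finset.mem_image]; exact Or.inr ⟨w, hc, rfl⟩)
        have hwv : w ≠ v := fun hc => hwmem (by rw [hc]; exact Finset.mem_insert_self _ _)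
        exact hVzero w hwv (fun hc => hwmem (Finset.mem_insert_of_mem hc))
      · apply hBzero
        intro hc
        exact hw (by simp only [Finset.mem_union, Finset.mem_image]; exact Or.inl ⟨t, hc, rfl⟩)
    · -- deletion case: min p q = 0
      have hmin : min p q = 0 := by
        have hor : Sum.inl v ∉ s ∨ Sum.inr () ∉ s := by
          by_contra hc
          push_neg at hc
          apply hsne
          apply Finset.Subset.antisymm hs_sub
          intro x hx
          simp only [Finset.mem_insert, Finset.mem_singleton] at hx
          rcases hx with rfl | rfl
          · exact hc.1
          · exact hc.2
        rcases hor with hns | hns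
        · have hp0 : p = 0 := by
            apply hzero
            simp only [Finset.mem_union, Finset.mem_image]
            rintro (h | ⟨x, hx, hxe⟩)
            · exact hns h
            · cases Sum.inl_injective hxe; exact hvσ hx
          rw [hp0]
          exact min_eq_left (hpos (Sum.inr ()))
        · have hq0 : q = 0 := by
            apply hzero
            simp only [Finset.mem_union, Finset.mem_image]
            rintro (h | ⟨x, hx, hxe⟩)
            · exact hns h
            · cases hxe
          rw [hq0]
          exact min_eq_right (hpos (Sum.inl v))
      refine ⟨sB.image Sum.inr ∪ σ.image Sum.inl,
        ⟨sB, σ, hsBne, hσK, rfl⟩, ?_⟩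
      rintro (w | t) hw
      · by_cases hwv : w = v
        · rw [hwv, Lmap_inl_v, ← hp, ← hq, hmin]; ring
        · refine hVzero w hwv ?_
          intro hc
          exact hw (by simp only [Finset.mem_union, Finset.mem_image]; exact Or.inr ⟨w, hc, rfl⟩)
      · apply hBzero
        intro hc
        exact hw (by simp only [Finset.mem_union, Finset.mem_image]; exact Or.inl ⟨t, hc, rfl⟩)


lemma Lmap_surj (hK : IsComplex K) {g : V ⊕ Bool → ℝ} (hg : g ∈ realization (suspOf K)) :
    ∃ f ∈ realization (wedgeAt K v), Lmap v f = g := by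
  have hab := susp_pole_zero K hg
  obtain ⟨hpos, hsum, τ, hτ, hzero⟩ := hg
  obtain ⟨s₀, σ₀, hs₀, hσ₀K, rfl⟩ := hτ
  set a := g (Sum.inr true) with ha
  set b := g (Sum.inr false) with hb
  set gv := g (Sum.inl v) with hgv
  set f : V ⊕ Unit → ℝ := Sum.elim
    (Function.update (fun w => g (Sum.inl w)) v (gv / 2 + a)) (fun _ => gv / 2 + b)
    with hf
  have hfv : f (Sum.inl v) = gv / 2 + a := by rw [hf]; simp
  have hfu : f (Sum.inr ()) = gv / 2 + b := by rw [hf]; simp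
  have hfw : ∀ w : V, w ≠ v → f (Sum.inl w) = g (Sum.inl w) := by
    intro w hw; rw [hf]; simp [Function.update_of_ne hw]
  have hmin : min a b = 0 := by
    rcases hab with h | h
    · rw [h]; exact min_eq_left (hpos (Sum.inr false))
    · rw [h]; exact min_eq_right (hpos (Sum.inr true))
  have hLg : Lmap v f = g := by
    funext w
    rcases w with w | t
    · by_cases hw : w = v
      · subst hw
        rw [Lmap_inl_v, hfv, hfu]
        have : min (gv / 2 + a) (gv / 2 + b) = gv / 2 + min a b := min_add_add_left _ _ _
        rw [this, hmin]; ring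
      · rw [Lmap_inl_ne v f hw, hfw w hw]
    · cases t
      · rw [Lmap_ff, hfu, hfv]
        have : gv / 2 + b - (gv / 2 + a) = b - a := by ring
        rw [this, ← hb]
        rcases hab with h | h
        · rw [h]; simp [max_eq_left (hpos (Sum.inr false))]; exact hpos (Sum.inr false)
        · rw [h]; simpa using max_eq_right (neg_nonpos.2 (hpos (Sum.inr true)))
      · rw [Lmap_tt, hfv, hfu]
        have : gv / 2 + a - (gv / 2 + b) = a - b := by ring
        rw [this, ← ha]
        rcases hab with h | h
        · rw [h]; simpa using max_eq_right (neg_nonpos.2 (hpos (Sum.inr false)))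
        · rw [h]; simp [max_eq_left (hpos (Sum.inr true))]; exact hpos (Sum.inr true)
  refine ⟨f, ⟨?_, ?_, ?_⟩, hLg⟩
  · -- nonneg
    have hgv0 : 0 ≤ gv := hpos (Sum.inl v)
    rintro (w | u)
    · by_cases hw : w = v
      · rw [hw, hfv]
        have := hpos (Sum.inr true); positivity
      · rw [hfw w hw]; exact hpos _
    · cases u
      rw [hfu]
      have := hpos (Sum.inr false); positivity
  · -- sum
    rw [Fintype.sum_sum_type]
    have hA : (∑ w : V, f (Sum.inl w)) = gv / 2 + a + ((∑ w : V, g (Sum.inl w)) - gv) := by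
      have heq : (fun w => f (Sum.inl w))
          = Function.update (fun w => g (Sum.inl w)) v (gv / 2 + a) := by
        funext w
        by_cases hw : w = v
        · rw [hw, hfv, Function.update_self]
        · rw [hfw w hw, Function.update_of_ne hw]
      rw [heq, Finset.sum_update_of_mem (Finset.mem_univ v)]
      have hd := Finset.sum_eq_sum_sdiff_singleton_add (Finset.mem_univ v)
        (fun w => g (Sum.inl w))
      rw [← hgv] at hd
      linarith
    have hC : (∑ w : V, g (Sum.inl w)) + (a + b) = 1 := by
      rw [← hsum, Fintype.sum_sum_type, Fintype.sum_bool]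
    have hU : (∑ u : Unit, f (Sum.inr u)) = gv / 2 + b := by rw [hf]; simp
    rw [hA, hU]
    linarith
  · -- support
    by_cases hvin : v ∈ σ₀
    · refine ⟨{Sum.inl v, Sum.inr ()} ∪ (σ₀.erase v).image Sum.inl,
        ⟨{Sum.inl v, Sum.inr ()}, σ₀.erase v, Finset.Subset.refl _, rfl,
          Or.inl ⟨Finset.notMem_erase v σ₀, by
            rw [Finset.insert_erase hvin]; exact hσ₀K⟩⟩, ?_⟩
      rintro (w | u) hw
      · have hwv : w ≠ v := by
          rintro rfl
          exact hw (Finset.mem_union_left _ (by simp))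
        have hwσ : w ∉ σ₀ := by
          intro hc
          refine hw (Finset.mem_union_right _ ?_)
          exact Finset.mem_image_of_mem _ (Finset.mem_erase.2 ⟨hwv, hc⟩)
        rw [hfw w hwv]
        apply hzero
        simp only [Finset.mem_union, Finset.mem_image]
        rintro (⟨x, _, hx⟩ | ⟨x, hx, hxe⟩)
        · cases hx
        · cases Sum.inl_injective hxe; exact hwσ hx
      · exact absurd (Finset.mem_union_left _ (by simp)) hw
    · have hgv0 : gv = 0 := by
        apply hzero
        simp only [Finset.mem_union, Finset.mem_image]
        rintro (⟨x, _, hx⟩ | ⟨x, hx, hxe⟩)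
        · cases hx
        · cases Sum.inl_injective hxe; exact hvin hx
      have hglzero : ∀ w : V, w ∉ σ₀ → g (Sum.inl w) = 0 := by
        intro w hwσ
        apply hzero
        simp only [Finset.mem_union, Finset.mem_image]
        rintro (⟨x, _, hx⟩ | ⟨x, hx, hxe⟩)
        · cases hx
        · cases Sum.inl_injective hxe; exact hwσ hx
      rcases hab with hA0 | hB0
      · -- a = 0, use s = {inr ()}
        refine ⟨{Sum.inr ()} ∪ σ₀.image Sum.inl,
          ⟨{Sum.inr ()}, σ₀, by intro x hx; simp at hx; simp [hx], rfl,
            Or.inr ⟨pair_ne_singr v, hσ₀K, hvin⟩⟩, ?_⟩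
        rintro (w | u) hw
        · have hwσ : w ∉ σ₀ := by
            intro hc
            exact hw (Finset.mem_union_right _ (Finset.mem_image_of_mem _ hc))
          by_cases hwv : w = v
          · rw [hwv, hfv, hgv0, hA0]; ring
          · rw [hfw w hwv]; exact hglzero w hwσ
        · exact absurd (Finset.mem_union_left _ (by simp)) hw
      · -- b = 0, use s = {inl v}
        refine ⟨{Sum.inl v} ∪ σ₀.image Sum.inl,
          ⟨{Sum.inl v}, σ₀, by intro x hx; simp at hx; simp [hx], rfl,
            Or.inr ⟨pair_ne_singl v, hσ₀K, hvin⟩⟩, ?_⟩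
        rintro (w | u) hw
        · have hwσ : w ∉ σ₀ := by
            intro hc
            exact hw (Finset.mem_union_right _ (Finset.mem_image_of_mem _ hc))
          have hwv : w ≠ v := by
            rintro rfl
            exact hw (Finset.mem_union_left _ (by simp))
          rw [hfw w hwv]; exact hglzero w hwσ
        · cases u
          rw [hfu, hgv0, hB0]; ring


/-! ### The suspension-to-sphere map -/

/-- default point of `realization K` -/
noncomputable def dpt (hv : ({v} : Finset V) ∈ K) : realization K :=
  ⟨fun w => if w = v then 1 else 0, by
    refine ⟨fun w => by positivity, by simp, {v}, hv, ?_⟩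
    intro w hw
    simp only [Finset.mem_singleton] at hw
    simp [hw]⟩

def za (g : V ⊕ Bool → ℝ) : ℝ := g (Sum.inr true) - g (Sum.inr false)

def mu (g : V ⊕ Bool → ℝ) : ℝ := 1 - g (Sum.inr true) - g (Sum.inr false)

noncomputable def cc (g : V ⊕ Bool → ℝ) : ℝ := Real.sqrt (1 - za g ^ 2)

noncomputable def Pmap (g : V ⊕ Bool → ℝ) : V → ℝ := fun w => g (Sum.inl w) / mu g

open scoped Classical in
noncomputable def xfun (hv : ({v} : Finset V) ∈ K) (g : V ⊕ Bool → ℝ) : realization K :=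
  if hm : Pmap g ∈ realization K then ⟨Pmap g, hm⟩ else dpt K v hv

variable {K} in
lemma susp_mu_eq {g : V ⊕ Bool → ℝ} (hg : g ∈ realization (suspOf K)) :
    mu g = ∑ w : V, g (Sum.inl w) := by
  obtain ⟨hpos, hsum, _⟩ := hg
  rw [Fintype.sum_sum_type, Fintype.sum_bool] at hsum
  rw [mu]; linarith

variable {K} in
lemma susp_mu_nonneg {g : V ⊕ Bool → ℝ} (hg : g ∈ realization (suspOf K)) :
    0 ≤ mu g := by
  rw [susp_mu_eq hg]
  exact Finset.sum_nonneg fun w _ => hg.1 _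

variable {K} in
lemma susp_abs_za {g : V ⊕ Bool → ℝ} (hg : g ∈ realization (suspOf K)) :
    |za g| = 1 - mu g := by
  have h1 := hg.1 (Sum.inr true)
  have h2 := hg.1 (Sum.inr false)
  rcases susp_pole_zero K hg with h | h <;>
    · rw [za, mu, h] <;> simp [abs_of_nonpos, abs_of_nonneg, h1, h2] <;> ring_nf <;>
        first
          | rw [abs_of_nonpos (by linarith)]; ring
          | rw [abs_of_nonneg (by linarith)]; ring

variable {K} in
lemma susp_za_sq {g : V ⊕ Bool → ℝ} (hg : g ∈ realization (suspOf K)) :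
    za g ^ 2 ≤ 1 := by
  have h1 := susp_abs_za hg
  have h2 := susp_mu_nonneg hg
  have h3 : |za g| ≤ 1 := by linarith
  nlinarith [sq_abs (za g), abs_nonneg (za g)]

variable {K} in
lemma susp_cc_sq {g : V ⊕ Bool → ℝ} (hg : g ∈ realization (suspOf K)) :
    cc g ^ 2 = 1 - za g ^ 2 :=
  Real.sq_sqrt (by linarith [susp_za_sq hg])

variable {K} in
lemma susp_pole_coords {g : V ⊕ Bool → ℝ} (hg : g ∈ realization (suspOf K)) :
    g (Sum.inr true) = max (za g) 0 ∧ g (Sum.inr false) = max (-za g) 0 := by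
  have h1 := hg.1 (Sum.inr true)
  have h2 := hg.1 (Sum.inr false)
  rcases susp_pole_zero K hg with h | h
  · rw [za, h]
    constructor
    · rw [max_eq_right (by linarith)]
    · rw [neg_sub, sub_zero, max_eq_left h2]
  · rw [za, h]
    constructor
    · rw [sub_zero, max_eq_left h1]
    · rw [neg_sub, zero_sub, max_eq_right (by linarith)]

variable {K} in
lemma susp_inl_zero_of_mu {g : V ⊕ Bool → ℝ} (hg : g ∈ realization (suspOf K))
    (hm : mu g = 0) : ∀ w : V, g (Sum.inl w) = 0 := by
  have := susp_mu_eq hg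
  rw [hm] at this
  intro w
  have := (Finset.sum_eq_zero_iff_of_nonneg (fun w _ => hg.1 (Sum.inl w))).1 this.symm
  exact this w (Finset.mem_univ w)

variable {K} in
lemma susp_inl_support {g : V ⊕ Bool → ℝ} (hg : g ∈ realization (suspOf K)) :
    ∃ σ ∈ K, ∀ w : V, w ∉ σ → g (Sum.inl w) = 0 := by
  obtain ⟨hpos, hsum, τ, hτ, hzero⟩ := hg
  obtain ⟨s, σ, hs, hσ, rfl⟩ := hτ
  refine ⟨σ, hσ, fun w hw => ?_⟩
  apply hzero
  simp only [Finset.mem_union, Finset.mem_image]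
  rintro (⟨x, _, hx⟩ | ⟨x, hx, hxe⟩)
  · cases hx
  · cases Sum.inl_injective hxe; exact hw hx

variable {K} in
lemma susp_P_mem {g : V ⊕ Bool → ℝ} (hg : g ∈ realization (suspOf K))
    (hm : mu g ≠ 0) : Pmap g ∈ realization K := by
  have hmpos : 0 < mu g := lt_of_le_of_ne (susp_mu_nonneg hg) (Ne.symm hm)
  refine ⟨fun w => div_nonneg (hg.1 _) hmpos.le, ?_, ?_⟩
  · simp only [Pmap]
    rw [← Finset.sum_div, ← susp_mu_eq hg, div_self hm]
  · obtain ⟨σ, hσ, hz⟩ := susp_inl_support hg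
    exact ⟨σ, hσ, fun w hw => by simp only [Pmap]; rw [hz w hw]; simp⟩

variable {n : ℕ}

noncomputable def Theta (hv : ({v} : Finset V) ∈ K)
    (h : realization K ≃ₜ Metric.sphere (0 : EuclideanSpace ℝ (Fin n)) 1)
    (g : V ⊕ Bool → ℝ) : EuclideanSpace ℝ (Fin n) :=
  cc g • ((h (xfun K v hv g) : Metric.sphere (0 : EuclideanSpace ℝ (Fin n)) 1) :
    EuclideanSpace ℝ (Fin n))

lemma norm_Theta (hv : ({v} : Finset V) ∈ K)
    (h : realization K ≃ₜ Metric.sphere (0 : EuclideanSpace ℝ (Fin n)) 1)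
    (g : V ⊕ Bool → ℝ) : ‖Theta K v hv h g‖ = cc g := by
  rw [Theta, norm_smul]
  have h1 : ‖((h (xfun K v hv g) : Metric.sphere (0 : EuclideanSpace ℝ (Fin n)) 1) :
      EuclideanSpace ℝ (Fin n))‖ = 1 :=
    mem_sphere_zero_iff_norm.1 (h (xfun K v hv g)).2
  rw [h1, mul_one, Real.norm_eq_abs]
  exact abs_of_nonneg (Real.sqrt_nonneg _)

noncomputable def Phi (hv : ({v} : Finset V) ∈ K)
    (h : realization K ≃ₜ Metric.sphere (0 : EuclideanSpace ℝ (Fin n)) 1)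
    (g : V ⊕ Bool → ℝ) : EuclideanSpace ℝ (Fin (n + 1)) :=
  WithLp.toLp 2 (Fin.snoc (Theta K v hv h g).ofLp (za g))

variable {K v} in
lemma Phi_mem_sphere (hv : ({v} : Finset V) ∈ K)
    (h : realization K ≃ₜ Metric.sphere (0 : EuclideanSpace ℝ (Fin n)) 1)
    {g : V ⊕ Bool → ℝ} (hg : g ∈ realization (suspOf K)) :
    Phi K v hv h g ∈ Metric.sphere (0 : EuclideanSpace ℝ (Fin (n + 1))) 1 := by
  rw [mem_sphere_zero_iff_norm, EuclideanSpace.norm_eq]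
  have hsum : (∑ i : Fin (n + 1), ‖Phi K v hv h g i‖ ^ 2) = 1 := by
    rw [Fin.sum_univ_castSucc]
    have hlast : Phi K v hv h g (Fin.last n) = za g := by
      simp [Phi]
    have hcast : ∀ j : Fin n, Phi K v hv h g (Fin.castSucc j) = Theta K v hv h g j := by
      intro j; simp [Phi]
    have hthetasum : (∑ j : Fin n, ‖Theta K v hv h g j‖ ^ 2) = cc g ^ 2 := by
      have := EuclideanSpace.norm_eq (Theta K v hv h g)
      rw [norm_Theta] at this
      have h2 : cc g ^ 2 = (∑ j : Fin n, ‖Theta K v hv h g j‖ ^ 2) := by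
        rw [this, Real.sq_sqrt]
        positivity
      exact h2.symm
    calc (∑ j : Fin n, ‖Phi K v hv h g (Fin.castSucc j)‖ ^ 2)
          + ‖Phi K v hv h g (Fin.last n)‖ ^ 2
        = (∑ j : Fin n, ‖Theta K v hv h g j‖ ^ 2) + ‖za g‖ ^ 2 := by
          rw [hlast]
          congr 1
          exact Finset.sum_congr rfl fun j _ => by rw [hcast j]
      _ = cc g ^ 2 + za g ^ 2 := by
          rw [hthetasum, Real.norm_eq_abs, sq_abs]
      _ = 1 := by rw [susp_cc_sq hg]; ring
  rw [hsum, Real.sqrt_one]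

variable {K v} in
lemma cc_eq_zero_of_mu {g : V ⊕ Bool → ℝ} (hg : g ∈ realization (suspOf K))
    (hm : mu g = 0) : cc g = 0 := by
  have h1 := susp_abs_za hg
  rw [hm, sub_zero] at h1
  have h2 : za g ^ 2 = 1 := by rw [← sq_abs, h1, one_pow]
  rw [cc, h2, sub_self, Real.sqrt_zero]

variable {K v} in
lemma continuous_Phi (hv : ({v} : Finset V) ∈ K)
    (h : realization K ≃ₜ Metric.sphere (0 : EuclideanSpace ℝ (Fin n)) 1) :
    Continuous (fun g : realization (suspOf K) => Phi K v hv h g.1) := by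
  have hza : Continuous (fun g : realization (suspOf K) => za (g : V ⊕ Bool → ℝ)) :=
    ((continuous_apply (Sum.inr true)).comp continuous_subtype_val).sub
      ((continuous_apply (Sum.inr false)).comp continuous_subtype_val)
  have hmu : Continuous (fun g : realization (suspOf K) => mu (g : V ⊕ Bool → ℝ)) :=
    (continuous_const.sub
      ((continuous_apply (Sum.inr true)).comp continuous_subtype_val)).sub
      ((continuous_apply (Sum.inr false)).comp continuous_subtype_val)
  have hcc : Continuous (fun g : realization (suspOf K) => cc (g : V ⊕ Bool → ℝ)) :=
    Real.continuous_sqrt.comp (continuous_const.sub (hza.pow 2))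
  have hTheta : Continuous (fun g : realization (suspOf K) => Theta K v hv h g.1) := by
    rw [continuous_iff_continuousAt]
    intro g₀
    by_cases hm : mu (g₀ : V ⊕ Bool → ℝ) = 0
    · have hz : Theta K v hv h g₀.1 = 0 := by
        rw [Theta, cc_eq_zero_of_mu g₀.2 hm, zero_smul]
      rw [ContinuousAt, hz]
      apply squeeze_zero_norm (a := fun g : realization (suspOf K) => cc (g : V ⊕ Bool → ℝ))
      · intro g
        rw [norm_Theta]
      · have hcca := hcc.continuousAt (x := g₀)
        rw [ContinuousAt, cc_eq_zero_of_mu g₀.2 hm] at hcca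
        exact hcca
    · have hUopen : IsOpen {g : realization (suspOf K) | mu (g : V ⊕ Bool → ℝ) ≠ 0} :=
        isOpen_compl_singleton.preimage hmu
      have hU : {g : realization (suspOf K) | mu (g : V ⊕ Bool → ℝ) ≠ 0} ∈ nhds g₀ :=
        hUopen.mem_nhds hm
      have hxc : ContinuousAt (fun g : realization (suspOf K) => xfun K v hv g.1) g₀ := by
        rw [Topology.IsInducing.continuousAt_iff Topology.IsInducing.subtypeVal]
        have hP : ContinuousAt (fun g : realization (suspOf K) => Pmap (g : V ⊕ Bool → ℝ)) g₀ :=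
          continuousAt_pi.2 fun w => ContinuousAt.div
            (((continuous_apply (Sum.inl w)).comp continuous_subtype_val).continuousAt)
            hmu.continuousAt hm
        refine hP.congr ?_
        refine Filter.eventuallyEq_of_mem hU (fun g hg => ?_)
        have : Pmap (g : V ⊕ Bool → ℝ) ∈ realization K := susp_P_mem g.2 hg
        simp only [Function.comp, xfun, dif_pos this]
      have hcoe : ContinuousAt (fun g : realization (suspOf K) =>
          ((h (xfun K v hv g.1) : Metric.sphere (0 : EuclideanSpace ℝ (Fin n)) 1) :
            EuclideanSpace ℝ (Fin n))) g₀ :=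
        (continuous_subtype_val.continuousAt).comp (h.continuous.continuousAt.comp hxc)
      exact (hcc.continuousAt).smul hcoe
  rw [← Homeomorph.comp_continuous_iff
    (EuclideanSpace.equiv (Fin (n + 1)) ℝ).toHomeomorph]
  apply continuous_pi
  intro i
  refine Fin.lastCases (motive := fun i => Continuous fun g : realization (suspOf K) =>
    ((EuclideanSpace.equiv (Fin (n + 1)) ℝ).toHomeomorph ∘
      fun g : realization (suspOf K) => Phi K v hv h g.1) g i) ?_ ?_ i
  · simpa [Phi, Fin.snoc_last] using hza
  · intro j
    have hTj : Continuous (fun g : realization (suspOf K) => Theta K v hv h g.1 j) :=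
      (continuous_apply j).comp
        ((EuclideanSpace.equiv (Fin n) ℝ).continuous.comp hTheta)
    simpa [Phi, Fin.snoc_castSucc] using hTj

lemma max_add_max_neg (a : ℝ) : max a 0 + max (-a) 0 = |a| := by
  rcases le_total 0 a with h | h
  · rw [max_eq_left h, max_eq_right (by linarith), abs_of_nonneg h, add_zero]
  · rw [max_eq_right h, max_eq_left (by linarith), abs_of_nonpos h, zero_add]

variable {K v} in
lemma Phi_injective (hv : ({v} : Finset V) ∈ K)
    (h : realization K ≃ₜ Metric.sphere (0 : EuclideanSpace ℝ (Fin n)) 1)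
    (g g' : realization (suspOf K))
    (heq : Phi K v hv h g.1 = Phi K v hv h g'.1) : g = g' := by
  have hz : za (g : V ⊕ Bool → ℝ) = za (g' : V ⊕ Bool → ℝ) := by
    have := congrArg (fun x => x (Fin.last n)) heq
    simpa [Phi, Fin.snoc_last] using this
  have hTj : ∀ j : Fin n, Theta K v hv h g.1 j = Theta K v hv h g'.1 j := by
    intro j
    have := congrArg (fun x => x (Fin.castSucc j)) heq
    simpa [Phi, Fin.snoc_castSucc] using this
  have hpole := susp_pole_coords g.2
  have hpole' := susp_pole_coords g'.2
  have htrue : g.1 (Sum.inr true) = g'.1 (Sum.inr true) := by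
    rw [hpole.1, hpole'.1, hz]
  have hfalse : g.1 (Sum.inr false) = g'.1 (Sum.inr false) := by
    rw [hpole.2, hpole'.2, hz]
  have hmu : mu (g : V ⊕ Bool → ℝ) = mu (g' : V ⊕ Bool → ℝ) := by
    rw [mu, mu, htrue, hfalse]
  apply Subtype.ext
  funext w
  rcases w with w | t
  · by_cases hm : mu (g : V ⊕ Bool → ℝ) = 0
    · rw [susp_inl_zero_of_mu g.2 hm, susp_inl_zero_of_mu g'.2 (hmu ▸ hm)]
    · -- positive case: recover via Theta
      have hm' : mu (g' : V ⊕ Bool → ℝ) ≠ 0 := hmu ▸ hm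
      have hccpos : 0 < cc (g : V ⊕ Bool → ℝ) := by
        rw [cc]
        apply Real.sqrt_pos.2
        have h1 := susp_abs_za g.2
        have h2 : 0 < mu (g : V ⊕ Bool → ℝ) :=
          lt_of_le_of_ne (susp_mu_nonneg g.2) (Ne.symm hm)
        nlinarith [sq_abs (za (g : V ⊕ Bool → ℝ)), abs_nonneg (za (g : V ⊕ Bool → ℝ))]
      have hcc : cc (g : V ⊕ Bool → ℝ) = cc (g' : V ⊕ Bool → ℝ) := by rw [cc, cc, hz]
      have hxeq : xfun K v hv g.1 = xfun K v hv g'.1 := by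
        apply h.injective
        apply Subtype.ext
        ext j
        have := hTj j
        rw [Theta, Theta, ← hcc] at this
        have hj : cc (g : V ⊕ Bool → ℝ) *
            ((h (xfun K v hv g.1) : Metric.sphere (0 : EuclideanSpace ℝ (Fin n)) 1) :
              EuclideanSpace ℝ (Fin n)) j
            = cc (g : V ⊕ Bool → ℝ) *
            ((h (xfun K v hv g'.1) : Metric.sphere (0 : EuclideanSpace ℝ (Fin n)) 1) :
              EuclideanSpace ℝ (Fin n)) j := this
        exact mul_left_cancel₀ (ne_of_gt hccpos) hj
      have hP : Pmap (g : V ⊕ Bool → ℝ) = Pmap (g' : V ⊕ Bool → ℝ) := by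
        have h1 : xfun K v hv g.1 = ⟨Pmap (g : V ⊕ Bool → ℝ), susp_P_mem g.2 hm⟩ := by
          rw [xfun, dif_pos (susp_P_mem g.2 hm)]
        have h2 : xfun K v hv g'.1 = ⟨Pmap (g' : V ⊕ Bool → ℝ), susp_P_mem g'.2 hm'⟩ := by
          rw [xfun, dif_pos (susp_P_mem g'.2 hm')]
        have := h1 ▸ h2 ▸ hxeq
        exact congrArg Subtype.val this
      have := congrFun hP w
      simp only [Pmap] at this
      have h2 : g.1 (Sum.inl w) / mu (g : V ⊕ Bool → ℝ)
          = g'.1 (Sum.inl w) / mu (g : V ⊕ Bool → ℝ) := by rw [hmu] at this ⊢; exact this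
      field_simp at h2
      exact h2
  · cases t
    · exact hfalse
    · exact htrue

variable {K v} in
lemma Phi_surjective (hK : IsComplex K) (hv : ({v} : Finset V) ∈ K)
    (h : realization K ≃ₜ Metric.sphere (0 : EuclideanSpace ℝ (Fin n)) 1)
    (y : EuclideanSpace ℝ (Fin (n + 1)))
    (hy : y ∈ Metric.sphere (0 : EuclideanSpace ℝ (Fin (n + 1))) 1) :
    ∃ g ∈ realization (suspOf K), Phi K v hv h g = y := by
  rw [mem_sphere_zero_iff_norm] at hy
  set zl := y (Fin.last n) with hzl
  have hysum : (∑ i : Fin (n + 1), y i ^ 2) = 1 := by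
    have := EuclideanSpace.norm_eq y
    rw [hy] at this
    have h2 : (∑ i : Fin (n + 1), ‖y i‖ ^ 2) = 1 := by
      nlinarith [Real.sq_sqrt (show 0 ≤ ∑ i : Fin (n + 1), ‖y i‖ ^ 2 by positivity), this]
    simpa [Real.norm_eq_abs, sq_abs] using h2
  have hcast_sum : (∑ j : Fin n, y (Fin.castSucc j) ^ 2) = 1 - zl ^ 2 := by
    rw [Fin.sum_univ_castSucc] at hysum
    linarith
  have hzl2 : zl ^ 2 ≤ 1 := by
    nlinarith [Finset.sum_nonneg (fun (j : Fin n) (_ : j ∈ Finset.univ) =>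
      sq_nonneg (y (Fin.castSucc j)))]
  -- the Bool-side face
  set sB : Finset Bool := if 0 ≤ zl then {true} else {false} with hsB
  have hsBne : sB ≠ Finset.univ := by rw [hsB]; split <;> exact singl_bool_ne_univ _
  have hpolemem : ∀ t : Bool, t ∉ sB →
      (if t = true then max zl 0 else max (-zl) 0) = 0 := by
    intro t ht
    rw [hsB] at ht
    by_cases hz0 : 0 ≤ zl
    · rw [if_pos hz0] at ht
      cases t
      · simp only [if_neg Bool.false_ne_true]
        rw [max_eq_right (by linarith)]
      · simp at ht
    · rw [if_neg hz0] at ht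
      cases t
      · simp at ht
      · rw [if_pos rfl, max_eq_right (by linarith)]
  by_cases hpole : 1 - zl ^ 2 = 0
  · -- pole case
    have hzlabs : |zl| = 1 := by
      have : zl ^ 2 = 1 := by linarith
      rw [← Real.sqrt_sq_eq_abs, this, Real.sqrt_one]
    have hcoordzero : ∀ j : Fin n, y (Fin.castSucc j) = 0 := by
      intro j
      have hz : (∑ j : Fin n, y (Fin.castSucc j) ^ 2) = 0 := by rw [hcast_sum]; linarith
      have := (Finset.sum_eq_zero_iff_of_nonneg
        (fun (j : Fin n) (_ : j ∈ Finset.univ) => sq_nonneg (y (Fin.castSucc j)))).1 hz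
      exact pow_eq_zero_iff (n := 2) (by norm_num) |>.1 (this j (Finset.mem_univ j))
    set g : V ⊕ Bool → ℝ := Sum.elim (fun _ => 0)
      (fun t => if t = true then max zl 0 else max (-zl) 0) with hg
    have h2 : g (Sum.inr true) = max zl 0 := by rw [hg]; simp
    have h3 : g (Sum.inr false) = max (-zl) 0 := by rw [hg]; simp
    have h4 : ∀ w : V, g (Sum.inl w) = 0 := fun w => by rw [hg]; simp
    refine ⟨g, ⟨?_, ?_, ?_⟩, ?_⟩
    · rintro (w | t)
      · rw [h4]
      · cases t
        · rw [h3]; exact le_max_right _ _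
        · rw [h2]; exact le_max_right _ _
    · rw [Fintype.sum_sum_type, Fintype.sum_bool, h2, h3]
      have h5 : (∑ w : V, g (Sum.inl w)) = 0 := Finset.sum_eq_zero fun w _ => h4 w
      rw [h5]
      have := max_add_max_neg zl
      linarith
    · refine ⟨sB.image Sum.inr ∪ (∅ : Finset V).image Sum.inl,
        ⟨sB, ∅, hsBne, hK _ hv _ (Finset.empty_subset _), rfl⟩, ?_⟩
      rintro (w | t) hw
      · exact h4 w
      · rw [hg]
        simp only [Sum.elim_inr]
        apply hpolemem
        intro hc
        exact hw (Finset.mem_union_left _ (Finset.mem_image_of_mem _ hc))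
    · -- Phi = y
      have hza : za g = zl := by
        rw [za, h2, h3, max_zero_sub_max_neg_zero_eq_self]
      have hcc : cc g = 0 := by
        rw [cc, hza, hpole, Real.sqrt_zero]
      ext i
      refine Fin.lastCases ?_ ?_ i
      · rw [Phi]
        simp only [Fin.snoc_last]
        rw [hza, hzl]
      · intro j
        rw [Phi]
        simp only [Fin.snoc_castSucc]
        rw [Theta, hcc, zero_smul, hcoordzero j]
        rfl
  · -- main case
    have hplt : 0 < 1 - zl ^ 2 := lt_of_le_of_ne (by linarith) (Ne.symm hpole)
    have hzlabs : |zl| < 1 := by nlinarith [sq_abs zl, abs_nonneg zl]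
    set c := Real.sqrt (1 - zl ^ 2) with hc
    have hcpos : 0 < c := Real.sqrt_pos.2 hplt
    have hcsq : c ^ 2 = 1 - zl ^ 2 := Real.sq_sqrt (by linarith)
    set x' : EuclideanSpace ℝ (Fin n) := WithLp.toLp 2 (c⁻¹ • (fun j => y (Fin.castSucc j))) with hx'
    have hx'j : ∀ j : Fin n, x' j = c⁻¹ * y (Fin.castSucc j) := fun j => rfl
    have hx'norm : ‖x'‖ = 1 := by
      rw [EuclideanSpace.norm_eq]
      have hs : (∑ j : Fin n, ‖x' j‖ ^ 2) = 1 := by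
        have hterm : ∀ j : Fin n, ‖x' j‖ ^ 2 = c⁻¹ ^ 2 * y (Fin.castSucc j) ^ 2 := by
          intro j
          rw [hx'j j, Real.norm_eq_abs, sq_abs]
          ring
        rw [Finset.sum_congr rfl fun j _ => hterm j, ← Finset.mul_sum, hcast_sum, ← hcsq]
        field_simp
      rw [hs, Real.sqrt_one]
    set xx : realization K := h.symm ⟨x', mem_sphere_zero_iff_norm.2 hx'norm⟩ with hxx
    obtain ⟨hxpos, hxsum, σ, hσK, hxzero⟩ := xx.2
    set g : V ⊕ Bool → ℝ := Sum.elim (fun w => (1 - |zl|) * xx.1 w)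
      (fun t => if t = true then max zl 0 else max (-zl) 0) with hg
    have h2 : g (Sum.inr true) = max zl 0 := by rw [hg]; simp
    have h3 : g (Sum.inr false) = max (-zl) 0 := by rw [hg]; simp
    have h4 : ∀ w : V, g (Sum.inl w) = (1 - |zl|) * xx.1 w := fun w => by rw [hg]; simp
    have hgmem : g ∈ realization (suspOf K) := by
      refine ⟨?_, ?_, ?_⟩
      · rintro (w | t)
        · rw [h4]
          exact mul_nonneg (by linarith [abs_nonneg zl]) (hxpos w)
        · cases t
          · rw [h3]; exact le_max_right _ _
          · rw [h2]; exact le_max_right _ _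
      · rw [Fintype.sum_sum_type, Fintype.sum_bool, h2, h3]
        have h1 : (∑ w : V, g (Sum.inl w)) = 1 - |zl| := by
          rw [Finset.sum_congr rfl fun w _ => h4 w, ← Finset.mul_sum, hxsum, mul_one]
        rw [h1]
        have := max_add_max_neg zl
        linarith
      · refine ⟨sB.image Sum.inr ∪ σ.image Sum.inl, ⟨sB, σ, hsBne, hσK, rfl⟩, ?_⟩
        rintro (w | t) hw
        · have hwσ : w ∉ σ := by
            intro hc
            exact hw (Finset.mem_union_right _ (Finset.mem_image_of_mem _ hc))
          rw [h4, hxzero w hwσ, mul_zero]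
        · rw [hg]
          simp only [Sum.elim_inr]
          apply hpolemem
          intro hc
          exact hw (Finset.mem_union_left _ (Finset.mem_image_of_mem _ hc))
    refine ⟨g, hgmem, ?_⟩
    have hza : za g = zl := by
      rw [za, h2, h3, max_zero_sub_max_neg_zero_eq_self]
    have hmug : mu g = 1 - |zl| := by
      rw [mu, h2, h3]
      have := max_add_max_neg zl
      linarith
    have hmune : mu g ≠ 0 := by rw [hmug]; intro hc; nlinarith [abs_nonneg zl]
    have hPx : Pmap g = xx.1 := by
      funext w
      simp only [Pmap, hmug, h4]
      rw [mul_comm, mul_div_assoc, div_self (by intro hc; rw [hmug] at hmune; exact hmune hc),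
        mul_one]
    have hxfun : xfun K v hv g = xx := by
      have hmem : Pmap g ∈ realization K := by rw [hPx]; exact xx.2
      rw [xfun, dif_pos hmem]
      exact Subtype.ext hPx
    have hccg : cc g = c := by rw [cc, hza, hc]
    have hTheta : Theta K v hv h g = WithLp.toLp 2 (fun j => y (Fin.castSucc j)) := by
      rw [Theta, hxfun, hxx, Homeomorph.apply_symm_apply, hccg]
      have hco : ((⟨x', mem_sphere_zero_iff_norm.2 hx'norm⟩ :
          Metric.sphere (0 : EuclideanSpace ℝ (Fin n)) 1) :
          EuclideanSpace ℝ (Fin n)) = x' := rfl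
      rw [hco, hx', ← WithLp.toLp_smul, smul_smul, mul_inv_cancel₀ (ne_of_gt hcpos), one_smul]
    ext i
    refine Fin.lastCases ?_ ?_ i
    · rw [Phi]
      simp only [Fin.snoc_last]
      rw [hza, hzl]
    · intro j
      rw [Phi]
      simp only [Fin.snoc_castSucc]
      rw [hTheta]

end Wedge

/-- The geometric realization of `wed_v(K)` is homeomorphic to that of the suspension
`∂I ⋆ K`; in particular, if `K` is a simplicial `(n-1)`-sphere then `wed_v(K)` is a
simplicial `n`-sphere. -/
theorem wedge_realization_homeo_suspension [Fintype V] [DecidableEq V]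
    (K : Set (Finset V)) (hK : IsComplex K) (v : V) (hv : ({v} : Finset V) ∈ K) :
    Nonempty (realization (wedgeAt K v) ≃ₜ realization (suspOf K)) ∧
    ∀ n : ℕ,
      Nonempty (realization K ≃ₜ (Metric.sphere (0 : EuclideanSpace ℝ (Fin n)) 1)) →
      Nonempty (realization (wedgeAt K v) ≃ₜ
        (Metric.sphere (0 : EuclideanSpace ℝ (Fin (n + 1))) 1)) := by
  haveI : CompactSpace (realization (wedgeAt K v)) :=
    isCompact_iff_compactSpace.mp (isCompact_realization _)
  haveI : CompactSpace (realization (suspOf K)) :=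
    isCompact_iff_compactSpace.mp (isCompact_realization _)
  let Ψ : realization (wedgeAt K v) → realization (suspOf K) :=
    fun f => ⟨Lmap v f.1, Lmap_mem K v f.2⟩
  have hbij : Function.Bijective Ψ := by
    constructor
    · intro f f' hff
      exact Subtype.ext (Lmap_injective v (congrArg Subtype.val hff))
    · intro g
      obtain ⟨f, hf, hLf⟩ := Lmap_surj K v hK g.2
      exact ⟨⟨f, hf⟩, Subtype.ext hLf⟩
  have hcontΨ : Continuous Ψ :=
    ((Lmap_continuous v).comp continuous_subtype_val).subtype_mk _
  have homeoA : realization (wedgeAt K v) ≃ₜ realization (suspOf K) :=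
    Continuous.homeoOfEquivCompactToT2 (f := Equiv.ofBijective Ψ hbij) hcontΨ
  refine ⟨⟨homeoA⟩, ?_⟩
  rintro n ⟨h⟩
  let Φ : realization (suspOf K) → Metric.sphere (0 : EuclideanSpace ℝ (Fin (n + 1))) 1 :=
    fun g => ⟨Phi K v hv h g.1, Phi_mem_sphere hv h g.2⟩
  have hbijΦ : Function.Bijective Φ := by
    constructor
    · intro g g' hgg
      exact Phi_injective hv h g g' (congrArg Subtype.val hgg)
    · intro y
      obtain ⟨g, hg, hPg⟩ := Phi_surjective hK hv h y.1 y.2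
      exact ⟨⟨g, hg⟩, Subtype.ext hPg⟩
  have hcontΦ : Continuous Φ := (continuous_Phi hv h).subtype_mk _
  have homeoB : realization (suspOf K) ≃ₜ
      Metric.sphere (0 : EuclideanSpace ℝ (Fin (n + 1))) 1 :=
    Continuous.homeoOfEquivCompactToT2 (f := Equiv.ofBijective Φ hbijΦ) hcontΦ
  exact ⟨homeoA.trans homeoB⟩
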